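/- arXiv:2510.15200 — 5 statements merged into one kernel-verified Lean document; each statement's English description precedes it below -/
import Mathlib

section
/- Let θ > 0, c > 0, 0 ≤ w_L ≤ w_H ≤ θ/2, η̄ ≥ 0, and suppose 0 ≤ k(θ−w_H) < 2c with η̄_H = k(θ−w_H)/(2c − k(θ−w_H)). Then the Defend profit π_{S₁}(k) = [2c(2+η̄_H+η̄) + (1+η̄_H)(1+η̄)k(θ−w_H)](θ−w_H)w_H/(4c²) is strictly increasing in k on [0, 2c/(θ−w_H)) whenever w_H > 0. -/
/-- The Defend profit `π_{S₁}(k)` is strictly increasing in `k` on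
`[0, 2c/(θ−w_H))` whenever `w_H > 0`. -/
theorem defend_profit_increasing (θ c wL wH ηbar : ℝ)
    (hθ : 0 < θ) (hc : 0 < c) (hwL : 0 ≤ wL) (hLH : wL ≤ wH)
    (hH : wH ≤ θ / 2) (hηbar : 0 ≤ ηbar) (hwH : 0 < wH) :
    let ηH : ℝ → ℝ := fun k => k * (θ - wH) / (2 * c - k * (θ - wH))
    let πS₁ : ℝ → ℝ := fun k =>
      (2 * c * (2 + ηH k + ηbar) + (1 + ηH k) * (1 + ηbar) * k * (θ - wH)) *
        (θ - wH) * wH / (4 * c ^ 2)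
    ∀ k k' : ℝ, 0 ≤ k → k < k' → k' < 2 * c / (θ - wH) →
      πS₁ k < πS₁ k' := by
  intro ηH πS₁ k k' hk hkk' hk'
  have hd : 0 < θ - wH := by linarith
  have hxk' : k' * (θ - wH) < 2 * c := by
    have := (lt_div_iff₀ hd).mp hk'
    linarith
  have hxk : k * (θ - wH) < 2 * c := by
    have : k * (θ - wH) < k' * (θ - wH) := by nlinarith
    linarith
  have hden : ∀ m : ℝ, m * (θ - wH) < 2 * c →
      πS₁ m = (2 + ηbar) * (θ - wH) * wH / (2 * c - m * (θ - wH)) := by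
    intro m hm
    have h0 : 2 * c - m * (θ - wH) ≠ 0 := by linarith
    simp only [πS₁, ηH]
    field_simp
    ring
  rw [hden k hxk, hden k' hxk']
  have hnum : 0 < (2 + ηbar) * (θ - wH) * wH := by positivity
  apply div_lt_div_of_pos_left hnum (by linarith)
  nlinarith
end

section
/- Let θ > 0, c > 0, 0 < w_L ≤ w_H ≤ θ/2, η̄ ≥ 0, 0 ≤ k(θ−w_L) < 2c, and η̄_L = k(θ−w_L)/(2c−k(θ−w_L)). Then the Dominate profit π_{S₂} = [2c(2+η̄_L+η̄)+(1+η̄_L)(1+η̄)k(θ−w_L)](θ−w_L)w_L/(4c²) is at least the Harvest profit π_{S₀} = (1+η̄)(θ−w_H)w_H/(2c) if and only if k ≥ 2c·(1/(θ−w_L) − (2+η̄)w_L/((1+η̄)(θ−w_H)w_H)). -/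
/-- Dominate profit `π_{S₂}` is at least Harvest profit `π_{S₀}` iff
`k ≥ 2c(1/(θ−w_L) − (2+η̄)w_L/((1+η̄)(θ−w_H)w_H))`. -/
theorem dominate_vs_harvest (θ c wL wH ηbar k : ℝ)
    (hθ : 0 < θ) (hc : 0 < c) (hwL : 0 < wL) (hLH : wL ≤ wH)
    (hH : wH ≤ θ / 2) (hηbar : 0 ≤ ηbar)
    (hk0 : 0 ≤ k * (θ - wL)) (hk2c : k * (θ - wL) < 2 * c) :
    let ηL : ℝ := k * (θ - wL) / (2 * c - k * (θ - wL))
    let πS₂ : ℝ :=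
      (2 * c * (2 + ηL + ηbar) + (1 + ηL) * (1 + ηbar) * k * (θ - wL)) *
        (θ - wL) * wL / (4 * c ^ 2)
    let πS₀ : ℝ := (1 + ηbar) * (θ - wH) * wH / (2 * c)
    (πS₀ ≤ πS₂ ↔
      2 * c * (1 / (θ - wL) - (2 + ηbar) * wL / ((1 + ηbar) * (θ - wH) * wH)) ≤ k) := by
  intro ηL πS₂ πS₀
  have hwH : 0 < wH := lt_of_lt_of_le hwL hLH
  have htwH : 0 < θ - wH := by nlinarith
  have htwL : 0 < θ - wL := by nlinarith
  have hD : 0 < 2 * c - k * (θ - wL) := by linarith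
  have hA : 0 < (1 + ηbar) * (θ - wH) * wH := by positivity
  have hS2 : πS₂ = (2 + ηbar) * (θ - wL) * wL / (2 * c - k * (θ - wL)) := by
    show (2 * c * (2 + ηL + ηbar) + (1 + ηL) * (1 + ηbar) * k * (θ - wL)) *
        (θ - wL) * wL / (4 * c ^ 2) = _
    have hηL : ηL = k * (θ - wL) / (2 * c - k * (θ - wL)) := rfl
    rw [hηL]
    field_simp
    ring
  rw [hS2]
  show (1 + ηbar) * (θ - wH) * wH / (2 * c) ≤ _ ↔ _
  rw [div_le_div_iff₀ (by positivity) hD]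
  constructor
  · intro h
    rw [mul_sub] at h
    have h1 : (2 * c * (1 / (θ - wL) - (2 + ηbar) * wL / ((1 + ηbar) * (θ - wH) * wH)))
        * ((1 + ηbar) * (θ - wH) * wH * (θ - wL)) ≤ k * ((1 + ηbar) * (θ - wH) * wH * (θ - wL)) := by
      have e : (2 * c * (1 / (θ - wL) - (2 + ηbar) * wL / ((1 + ηbar) * (θ - wH) * wH)))
          * ((1 + ηbar) * (θ - wH) * wH * (θ - wL)) =
          2 * c * ((1 + ηbar) * (θ - wH) * wH) - 2 * c * ((2 + ηbar) * wL * (θ - wL)) := by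
        field_simp
      rw [e]
      nlinarith [h]
    exact le_of_mul_le_mul_right h1 (by positivity)
  · intro h
    have h1 : (2 * c * (1 / (θ - wL) - (2 + ηbar) * wL / ((1 + ηbar) * (θ - wH) * wH)))
        * ((1 + ηbar) * (θ - wH) * wH * (θ - wL)) ≤ k * ((1 + ηbar) * (θ - wH) * wH * (θ - wL)) :=
      mul_le_mul_of_nonneg_right h (by positivity)
    have e : (2 * c * (1 / (θ - wL) - (2 + ηbar) * wL / ((1 + ηbar) * (θ - wH) * wH)))
        * ((1 + ηbar) * (θ - wH) * wH * (θ - wL)) =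
        2 * c * ((1 + ηbar) * (θ - wH) * wH) - 2 * c * ((2 + ηbar) * wL * (θ - wL)) := by
      field_simp
    rw [e] at h1
    nlinarith [h1]
end

section
/- Let θ > 0 and 0 < w_L < w_H ≤ θ/2 with θ > w_H + w_L. Define k̄₁₂ = 2c(θ−w_L−w_H)/((θ−w_L)(θ−w_H+w_L+η̄w_L)), k̄₁₃ = 2c[η̄(θ−w_H)w_H−(1+η̄)θw_L+(1+η̄)w_L²]/((1+η̄)(θ−w_H)²w_H), and k̄₂₃ = 2c(1/(θ−w_L) − (2+η̄)w_L/((1+η̄)(θ−w_H)w_H)), and set η' = ((θ−w_H)² + w_L(w_H−w_L))/((θ−w_H−w_L)(w_H−w_L)). Then k̄₁₃ ≤ k̄₂₃ ≤ k̄₁₂ when η̄ ≤ η', and k̄₁₂ ≤ k̄₂₃ ≤ k̄₁₃ when η̄ ≥ η'. -/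
/-- Ordering of the three indifference thresholds `k̄₁₂, k̄₁₃, k̄₂₃` around
`η' = ((θ−w_H)² + w_L(w_H−w_L))/((θ−w_H−w_L)(w_H−w_L))`. -/
theorem threshold_ordering (θ c wL wH ηbar : ℝ)
    (hθ : 0 < θ) (hc : 0 < c) (hηbar : 0 ≤ ηbar)
    (hwL : 0 < wL) (hLH : wL < wH) (hH : wH ≤ θ / 2) (hsum : wH + wL < θ) :
    let k₁₂ : ℝ := 2 * c * (θ - wL - wH) / ((θ - wL) * (θ - wH + wL + ηbar * wL))
    let k₁₃ : ℝ :=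
      2 * c * (ηbar * (θ - wH) * wH - (1 + ηbar) * θ * wL + (1 + ηbar) * wL ^ 2) /
        ((1 + ηbar) * (θ - wH) ^ 2 * wH)
    let k₂₃ : ℝ :=
      2 * c * (1 / (θ - wL) - (2 + ηbar) * wL / ((1 + ηbar) * (θ - wH) * wH))
    let η' : ℝ := ((θ - wH) ^ 2 + wL * (wH - wL)) / ((θ - wH - wL) * (wH - wL))
    (ηbar ≤ η' → k₁₃ ≤ k₂₃ ∧ k₂₃ ≤ k₁₂) ∧
    (η' ≤ ηbar → k₁₂ ≤ k₂₃ ∧ k₂₃ ≤ k₁₃) := by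
  intro k₁₂ k₁₃ k₂₃ η'
  have hwH : 0 < wH := hwL.trans hLH
  have hL : 0 < θ - wL := by linarith
  have hHp : 0 < θ - wH := by linarith
  have hD : 0 < θ - wH - wL := by linarith
  have hHL : 0 < wH - wL := by linarith
  have h1e : 0 < 1 + ηbar := by linarith
  have h2e : 0 < 2 + ηbar := by linarith
  have hden12 : 0 < θ - wH + wL + ηbar * wL := by positivity
  set A : ℝ := (θ - wH) ^ 2 + wL * (wH - wL) - ηbar * ((θ - wH - wL) * (wH - wL)) with hA
  have hid1 : k₂₃ - k₁₃ =
      2 * c * (wH - wL) * A / ((1 + ηbar) * (θ - wH) ^ 2 * wH * (θ - wL)) := by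
    show (2 * c * (1 / (θ - wL) - (2 + ηbar) * wL / ((1 + ηbar) * (θ - wH) * wH))) -
      (2 * c * (ηbar * (θ - wH) * wH - (1 + ηbar) * θ * wL + (1 + ηbar) * wL ^ 2) /
        ((1 + ηbar) * (θ - wH) ^ 2 * wH)) = _
    rw [hA]
    field_simp
    ring
  have hid2 : k₁₂ - k₂₃ =
      2 * c * wL * (2 + ηbar) * A /
        ((1 + ηbar) * (θ - wH) * wH * (θ - wL) * (θ - wH + wL + ηbar * wL)) := by
    show (2 * c * (θ - wL - wH) / ((θ - wL) * (θ - wH + wL + ηbar * wL))) -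
      (2 * c * (1 / (θ - wL) - (2 + ηbar) * wL / ((1 + ηbar) * (θ - wH) * wH))) = _
    rw [hA]
    field_simp
    ring
  have hle : ηbar ≤ η' ↔ 0 ≤ A := by
    show ηbar ≤ ((θ - wH) ^ 2 + wL * (wH - wL)) / ((θ - wH - wL) * (wH - wL)) ↔ _
    rw [le_div_iff₀ (by positivity)]
    constructor <;> intro h <;> [skip; skip] <;> simp only [hA] at * <;> nlinarith
  have hge : η' ≤ ηbar ↔ A ≤ 0 := by
    show ((θ - wH) ^ 2 + wL * (wH - wL)) / ((θ - wH - wL) * (wH - wL)) ≤ ηbar ↔ _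
    rw [div_le_iff₀ (by positivity)]
    constructor <;> intro h <;> simp only [hA] at * <;> nlinarith
  constructor
  · intro h
    have hA0 : 0 ≤ A := hle.mp h
    constructor
    · have : 0 ≤ k₂₃ - k₁₃ := by rw [hid1]; positivity
      linarith
    · have : 0 ≤ k₁₂ - k₂₃ := by rw [hid2]; positivity
      linarith
  · intro h
    have hA0 : A ≤ 0 := hge.mp h
    constructor
    · have : k₁₂ - k₂₃ ≤ 0 := by
        rw [hid2]
        apply div_nonpos_of_nonpos_of_nonneg
        · exact mul_nonpos_of_nonneg_of_nonpos (by positivity) hA0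
        · positivity
      linarith
    · have : k₂₃ - k₁₃ ≤ 0 := by
        rw [hid1]
        apply div_nonpos_of_nonpos_of_nonneg
        · exact mul_nonpos_of_nonneg_of_nonpos (by positivity) hA0
        · positivity
      linarith
end

section
/- Under vertical integration with openness η̄ ≥ 0, cost scalar c > 0, conversion rate θ > 0 and flywheel strength k ≥ 0: the integrated firm's first-period optimal effort is Q₁ᵥ = (1+η̄)θ/(2c), and its second-period optimal effort is Q₂ᵥ = (1+η̄)[2c + kθ(1+η̄)]θ/(4c²); both are obtained by maximizing θQ − cQ²/(1+η̄) in period 1 and θQ − cQ²/((1+kQ₁ᵥ)(1+η̄)) in period 2. -/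
lemma quad_max (b a Q : ℝ) (ha : 0 < a) :
    b * Q - a * Q ^ 2 ≤ b * (b / (2 * a)) - a * (b / (2 * a)) ^ 2 := by
  have ha' : a ≠ 0 := ne_of_gt ha
  have e : b * (b / (2 * a)) - a * (b / (2 * a)) ^ 2 - (b * Q - a * Q ^ 2)
      = a * (Q - b / (2 * a)) ^ 2 := by field_simp; ring
  nlinarith [mul_nonneg ha.le (sq_nonneg (Q - b / (2 * a)))]

/-- Under vertical integration, the optimal efforts are
`Q₁ᵥ = (1+η̄)θ/(2c)` and `Q₂ᵥ = (1+η̄)[2c + kθ(1+η̄)]θ/(4c²)`, maximizing the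
respective per-period profits. -/
theorem vertical_integration_efforts (θ c ηbar k : ℝ)
    (hθ : 0 < θ) (hc : 0 < c) (hηbar : 0 ≤ ηbar) (hk : 0 ≤ k) :
    let Q₁v : ℝ := (1 + ηbar) * θ / (2 * c)
    let Q₂v : ℝ := (1 + ηbar) * (2 * c + k * θ * (1 + ηbar)) * θ / (4 * c ^ 2)
    let π₁ : ℝ → ℝ := fun Q => θ * Q - c * Q ^ 2 / (1 + ηbar)
    let π₂ : ℝ → ℝ := fun Q => θ * Q - c * Q ^ 2 / ((1 + k * Q₁v) * (1 + ηbar))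
    (∀ Q : ℝ, π₁ Q ≤ π₁ Q₁v) ∧ (∀ Q : ℝ, π₂ Q ≤ π₂ Q₂v) := by
  intro Q₁v Q₂v π₁ π₂
  have hη : (0:ℝ) < 1 + ηbar := by linarith
  have hQ1 : 0 < Q₁v := by show (0:ℝ) < _; positivity
  have hfly : (0:ℝ) < 1 + k * Q₁v := by positivity
  constructor
  · intro Q
    have a1 : (0:ℝ) < c / (1 + ηbar) := by positivity
    have h := quad_max θ (c / (1 + ηbar)) Q a1
    have hkey : θ / (2 * (c / (1 + ηbar))) = Q₁v := by
      show _ = (1 + ηbar) * θ / (2 * c)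
      field_simp
    simp only [π₁]
    calc θ * Q - c * Q ^ 2 / (1 + ηbar)
        = θ * Q - (c / (1 + ηbar)) * Q ^ 2 := by ring
      _ ≤ θ * (θ / (2 * (c / (1 + ηbar)))) - (c / (1 + ηbar)) * (θ / (2 * (c / (1 + ηbar)))) ^ 2 := h
      _ = θ * Q₁v - c * Q₁v ^ 2 / (1 + ηbar) := by rw [hkey]; ring
  · intro Q
    set d : ℝ := (1 + k * Q₁v) * (1 + ηbar) with hd
    have hdpos : (0:ℝ) < d := by positivity
    have a2 : (0:ℝ) < c / d := by positivity
    have h := quad_max θ (c / d) Q a2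
    have hkey : θ / (2 * (c / d)) = Q₂v := by
      show _ = (1 + ηbar) * (2 * c + k * θ * (1 + ηbar)) * θ / (4 * c ^ 2)
      rw [hd]
      show θ / (2 * (c / ((1 + k * ((1 + ηbar) * θ / (2 * c))) * (1 + ηbar)))) = _
      field_simp
      ring
    simp only [π₂]
    calc θ * Q - c * Q ^ 2 / d
        = θ * Q - (c / d) * Q ^ 2 := by ring
      _ ≤ θ * (θ / (2 * (c / d))) - (c / d) * (θ / (2 * (c / d))) ^ 2 := h
      _ = θ * Q₂v - c * Q₂v ^ 2 / d := by rw [hkey]; ring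
end

section
/- Fix θ > 0, c > 0, 0 ≤ w_L ≤ w_H ≤ θ/2, η̄ ≥ 0. When k = 0, the integrated firm's second-period effort Q₂ᵥ = (1+η̄)θ/(2c) is strictly less than the decentralized Harvest-regime second-period effort Q₂ = (1+η̄)²(θ−w_L)/(2c) whenever η̄·(θ−w_L) > w_L; i.e., foreclosing the entrant reduces second-period fine-tuning when the flywheel is absent and the entrant's learning advantage (1+η̄) is sufficiently large. -/
/-- With `k = 0`, integration's second-period effort `(1+η̄)θ/(2c)` is strictly
below the decentralized Harvest-regime effort `(1+η̄)²(θ−w_L)/(2c)` whenever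
`η̄(θ−w_L) > w_L`. -/
theorem foreclosure_reduces_effort (θ c wL wH ηbar : ℝ)
    (hθ : 0 < θ) (hc : 0 < c) (hwL : 0 ≤ wL) (hLH : wL ≤ wH)
    (hH : wH ≤ θ / 2) (hηbar : 0 ≤ ηbar)
    (hcond : wL < ηbar * (θ - wL)) :
    (1 + ηbar) * θ / (2 * c) < (1 + ηbar) ^ 2 * (θ - wL) / (2 * c) := by
  apply div_lt_div_of_pos_right ?_ (by linarith)
  nlinarith [mul_pos (by linarith : (0:ℝ) < 1 + ηbar) (sub_pos.mpr hcond)]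
end
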